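/- The map sending an ordered set partition π = B_1/.../B_k of [n] to the word w(π) = w_1...w_n ∈ [k]^n defined by w_i = j iff i ∈ B_j is a bijection between ordered set partitions of [n] into k blocks and surjective words of length n over [k]; moreover, π contains a permutation pattern p if and only if w(π) contains the pattern p^{-1}. -/

import Mathlib

open Finset BigOperators

/-- A word `w` of length `n` over the alphabet `[k]` contains the permutation
pattern `p` of length `m`. -/
def WordContains {n k m : ℕ} (w : Fin n → Fin k) (p : Equiv.Perm (Fin m)) : Prop :=
  ∃ ι : Fin m → Fin n, StrictMono ι ∧ ∀ a b : Fin m, w (ι a) < w (ι b) ↔ p a < p b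

/-- The number of words of length `n` over the alphabet `[k]` avoiding the pattern `p`. -/
noncomputable def wordAvoidCount (n k m : ℕ) (p : Equiv.Perm (Fin m)) : ℕ :=
  Nat.card {w : Fin n → Fin k // ¬ WordContains w p}

/-- An ordered set partition of `[n]` into `k` blocks. -/
structure OrdPartition (n k : ℕ) where
  blocks : Fin k → Finset (Fin n)
  blocks_nonempty : ∀ i, (blocks i).Nonempty
  blocks_disjoint : ∀ i j, i ≠ j → Disjoint (blocks i) (blocks j)
  blocks_cover : ∀ x : Fin n, ∃ i, x ∈ blocks i

/-- An ordered set partition contains the permutation pattern `p`. -/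
def OPContains {n k m : ℕ} (P : OrdPartition n k) (p : Equiv.Perm (Fin m)) : Prop :=
  ∃ ι : Fin m → Fin k, StrictMono ι ∧ ∃ b : Fin m → Fin n,
    (∀ j, b j ∈ P.blocks (ι j)) ∧ ∀ a c : Fin m, b a < b c ↔ p a < p c

/-- The number of ordered set partitions of `[n]` into `k` blocks avoiding `p`. -/
noncomputable def opAvoidCount (n k m : ℕ) (p : Equiv.Perm (Fin m)) : ℕ :=
  Nat.card {P : OrdPartition n k // ¬ OPContains P p}

/-- The pattern 321. -/
def p321 : Equiv.Perm (Fin 3) := Fin.revPerm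

namespace OPW

variable {n k : ℕ}

noncomputable def toWord (P : OrdPartition n k) (i : Fin n) : Fin k :=
  (P.blocks_cover i).choose

lemma mem_toWord (P : OrdPartition n k) (i : Fin n) : i ∈ P.blocks (toWord P i) :=
  (P.blocks_cover i).choose_spec

lemma toWord_eq_iff (P : OrdPartition n k) (i : Fin n) (j : Fin k) :
    toWord P i = j ↔ i ∈ P.blocks j := by
  constructor
  · rintro rfl; exact mem_toWord P i
  · intro h
    by_contra hne
    exact (Finset.disjoint_left.mp (P.blocks_disjoint _ _ hne) (mem_toWord P i)) h

lemma toWord_surj (P : OrdPartition n k) : Function.Surjective (toWord P) := by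
  intro j
  obtain ⟨i, hi⟩ := P.blocks_nonempty j
  exact ⟨i, (toWord_eq_iff P i j).2 hi⟩

def fromWord (w : Fin n → Fin k) (hw : Function.Surjective w) : OrdPartition n k where
  blocks j := Finset.univ.filter (fun i => w i = j)
  blocks_nonempty j := by obtain ⟨i, hi⟩ := hw j; exact ⟨i, by simp [hi]⟩
  blocks_disjoint i j hij := by
    simp only [Finset.disjoint_left, Finset.mem_filter, Finset.mem_univ, true_and]
    rintro a rfl h
    exact hij h
  blocks_cover x := ⟨w x, by simp⟩

lemma ext' {P Q : OrdPartition n k} (h : P.blocks = Q.blocks) : P = Q := by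
  cases P; cases Q; simp_all

end OPW

theorem op_word_bijection (n k : ℕ) :
    ∃ e : OrdPartition n k ≃ {w : Fin n → Fin k // Function.Surjective w},
      (∀ (P : OrdPartition n k) (i : Fin n) (j : Fin k),
          (e P).1 i = j ↔ i ∈ P.blocks j) ∧
      (∀ (m : ℕ) (p : Equiv.Perm (Fin m)) (P : OrdPartition n k),
          OPContains P p ↔ WordContains (e P).1 p⁻¹) := by
  refine ⟨⟨fun P => ⟨OPW.toWord P, OPW.toWord_surj P⟩,
    fun w => OPW.fromWord w.1 w.2, ?_, ?_⟩, ?_, ?_⟩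
  · intro P
    apply OPW.ext'
    funext j
    ext i
    simp only [OPW.fromWord, Finset.mem_filter, Finset.mem_univ, true_and]
    exact OPW.toWord_eq_iff P i j
  · intro w
    apply Subtype.ext
    funext i
    exact (OPW.toWord_eq_iff (OPW.fromWord w.1 w.2) i (w.1 i)).2 (Finset.mem_filter.2 ⟨Finset.mem_univ i, rfl⟩)
  · intro P i j
    exact OPW.toWord_eq_iff P i j
  · intro m p P
    show OPContains P p ↔ WordContains (OPW.toWord P) p⁻¹
    constructor
    · rintro ⟨ι, hι, b, hb, hbp⟩
      refine ⟨b ∘ ⇑p⁻¹, ?_, ?_⟩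
      · intro a c hac
        exact (hbp _ _).2 (by simp only [Equiv.Perm.coe_inv, Equiv.apply_symm_apply]; exact hac)
      · intro a c
        have ha : OPW.toWord P (b (p⁻¹ a)) = ι (p⁻¹ a) :=
          (OPW.toWord_eq_iff _ _ _).2 (hb _)
        have hc : OPW.toWord P (b (p⁻¹ c)) = ι (p⁻¹ c) :=
          (OPW.toWord_eq_iff _ _ _).2 (hb _)
        simp only [Function.comp_apply, ha, hc]
        exact hι.lt_iff_lt
    · rintro ⟨κ, hκ, hw⟩
      refine ⟨OPW.toWord P ∘ κ ∘ p, ?_, κ ∘ p, fun j => OPW.mem_toWord P _, ?_⟩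
      · intro a c hac
        have := (hw (p a) (p c)).symm
        simp only [Equiv.Perm.coe_inv, Equiv.symm_apply_apply] at this
        exact this.1 hac
      · intro a c
        simp only [Function.comp_apply]
        rw [hκ.lt_iff_lt]
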